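/- Let (W,S) be a Coxeter system and suppose a, b ∈ S satisfy m(a,b) = ∞ (i.e., ab has infinite order). Let C = S − {a,b}. If the visual subgroup ⟨C⟩ is normal in ⟨{a} ∪ C⟩, then a commutes with every element of C. -/

import Mathlib

open Real

namespace CoxeterGeomAux

variable {B : Type*} (M : CoxeterMatrix B)

noncomputable def kap (i j : B) : ℝ :=
  if M i j = 0 then -1 else -Real.cos (Real.pi / (M i j : ℝ))

lemma kap_symm (i j : B) : kap M i j = kap M j i := by
  unfold kap; rw [M.symmetric i j]

lemma kap_diag (i : B) : kap M i i = 1 := by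
  unfold kap
  rw [M.diagonal i]
  norm_num

noncomputable def bil (i : B) : (B →₀ ℝ) →ₗ[ℝ] ℝ :=
  Finsupp.linearCombination ℝ (fun j => kap M i j)

lemma bil_single (i j : B) (c : ℝ) : bil M i (Finsupp.single j c) = c * kap M i j := by
  simp [bil, Finsupp.linearCombination_single, smul_eq_mul]

noncomputable def sig (i : B) : Module.End ℝ (B →₀ ℝ) :=
  LinearMap.id - (Finsupp.lsingle i).comp ((2 : ℝ) • bil M i)

lemma sig_apply (i : B) (v : B →₀ ℝ) :
    sig M i v = v - Finsupp.single i (2 * bil M i v) := by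
  simp [sig, smul_eq_mul]

lemma sig_sq (i : B) : sig M i * sig M i = 1 := by
  apply LinearMap.ext
  intro v
  rw [Module.End.mul_apply, sig_apply, sig_apply]
  rw [map_sub, bil_single, kap_diag]
  simp only [Module.End.one_apply]
  rw [show 2 * (bil M i v - 2 * bil M i v * 1) = -(2 * bil M i v) by ring]
  rw [Finsupp.single_neg]
  abel

lemma sig_pow (i j : B) (h0 : M i j ≠ 0) (h1 : M i j ≠ 1) :
    (sig M i * sig M j) ^ (M i j) = 1 := by
  set m : ℕ := M i j with hm
  have hm2 : 2 ≤ m := by omega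
  have hmpos : (0:ℝ) < (m:ℝ) := by positivity
  set x : ℝ := Real.pi / m with hx
  have hxpos : 0 < x := div_pos Real.pi_pos hmpos
  have hxlt : x < Real.pi := by
    rw [hx]
    apply div_lt_self Real.pi_pos
    exact_mod_cast by omega
  set k : ℝ := Real.cos x with hk
  set s : ℝ := Real.sin x with hsin
  have hs : 0 < s := Real.sin_pos_of_pos_of_lt_pi hxpos hxlt
  have hs' : s ≠ 0 := ne_of_gt hs
  have hsk : s ^ 2 = 1 - k ^ 2 := by
    have := Real.sin_sq_add_cos_sq x
    rw [← hk, ← hsin] at this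
    linarith
  have hkij : kap M i j = -k := by rw [kap, if_neg h0]
  have hkji : kap M j i = -k := by rw [← kap_symm, hkij]
  have hki : kap M i i = 1 := kap_diag M i
  have hkj : kap M j j = 1 := kap_diag M j
  -- the parametrized circle in the plane spanned by e_i, e_j
  set g : ℝ → (B →₀ ℝ) := fun α =>
    (Real.cos α + k / s * Real.sin α) • Finsupp.single i 1
      + (Real.sin α / s) • Finsupp.single j 1 with hg
  have hbi : ∀ α, bil M i (g α) = Real.cos α := by
    intro α
    rw [hg]
    simp only [map_add, map_smul, bil_single, hki, hkij, smul_eq_mul]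
    field_simp
    ring
  have hbj : ∀ α, bil M j (g α) = s * Real.sin α - k * Real.cos α := by
    intro α
    rw [hg]
    simp only [map_add, map_smul, bil_single, hkji, hkj, smul_eq_mul]
    field_simp
    linear_combination (-Real.sin α) * hsk
  set ρ : Module.End ℝ (B →₀ ℝ) := sig M i * sig M j with hρ
  have hstep : ∀ α, ρ (g α) = g (α + 2 * x) := by
    intro α
    have h1 : sig M j (g α) = g α - Finsupp.single j (2 * (s * Real.sin α - k * Real.cos α)) := by
      rw [sig_apply, hbj]
    rw [hρ, Module.End.mul_apply, h1, sig_apply, map_sub, bil_single, hbi, hkij]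
    rw [show Finsupp.single j (2 * (s * Real.sin α - k * Real.cos α))
        = (2 * (s * Real.sin α - k * Real.cos α)) • Finsupp.single j (1:ℝ) by
      rw [Finsupp.smul_single', mul_one]]
    rw [show Finsupp.single i (2 * (Real.cos α - 2 * (s * Real.sin α - k * Real.cos α) * -k))
        = (2 * (Real.cos α - 2 * (s * Real.sin α - k * Real.cos α) * -k)) • Finsupp.single i (1:ℝ) by
      rw [Finsupp.smul_single', mul_one]]
    rw [hg]
    simp only
    rw [Real.cos_add, Real.sin_add, Real.cos_two_mul, Real.sin_two_mul, ← hk, ← hsin]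
    match_scalars
    · field_simp
      linear_combination (-2 * k * Real.sin α) * hsk
    · field_simp
      linear_combination (-2 * Real.sin α) * hsk
  have hpow : ∀ (n : ℕ) (α : ℝ), (ρ ^ n) (g α) = g (α + n * (2 * x)) := by
    intro n
    induction n with
    | zero => intro α; simp
    | succ n ih =>
      intro α
      rw [pow_succ, Module.End.mul_apply, hstep, ih]
      congr 1
      push_cast
      ring
  have hper : ∀ α, g (α + m * (2 * x)) = g α := by
    intro α
    have : (m : ℝ) * (2 * x) = 2 * Real.pi := by
      rw [hx]; field_simp
    rw [this, hg]
    simp [Real.cos_add_two_pi, Real.sin_add_two_pi]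
  have hfix : ∀ α, (ρ ^ m) (g α) = g α := by
    intro α; rw [hpow, hper]
  have hei : (ρ ^ m) (Finsupp.single i 1) = Finsupp.single i 1 := by
    have h0 : Finsupp.single i (1:ℝ) = g 0 := by
      rw [hg]; simp
    rw [h0, hfix]
  have hej : (ρ ^ m) (Finsupp.single j 1) = Finsupp.single j 1 := by
    have h0 : Finsupp.single j (1:ℝ) = s • g (Real.pi / 2) - k • g 0 := by
      rw [hg]
      simp only [Real.cos_pi_div_two, Real.sin_pi_div_two, Real.cos_zero, Real.sin_zero]
      match_scalars <;> field_simp <;> ring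
    rw [h0, map_sub, map_smul, map_smul, hfix, hfix]
  -- now decompose an arbitrary vector
  apply LinearMap.ext
  intro v
  rw [Module.End.one_apply]
  set p : ℝ := bil M i v with hp
  set q : ℝ := bil M j v with hq
  set x0 : ℝ := (p + k * q) / s ^ 2 with hx0
  set y0 : ℝ := (q + k * p) / s ^ 2 with hy0
  set z : (B →₀ ℝ) := v - x0 • Finsupp.single i 1 - y0 • Finsupp.single j 1 with hz
  have hxy1 : x0 - k * y0 = p := by
    rw [hx0, hy0]
    field_simp
    linear_combination (-p) * hsk
  have hxy2 : y0 - k * x0 = q := by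
    rw [hx0, hy0]
    field_simp
    linear_combination (-q) * hsk
  have hzi : bil M i z = 0 := by
    rw [hz]
    simp only [map_sub, map_smul, bil_single, hki, hkij, smul_eq_mul, ← hp]
    linear_combination -hxy1
  have hzj : bil M j z = 0 := by
    rw [hz]
    simp only [map_sub, map_smul, bil_single, hkj, hkji, smul_eq_mul, ← hq]
    linear_combination -hxy2
  have hρz : ρ z = z := by
    have h1 : sig M j z = z := by
      rw [sig_apply, hzj]
      norm_num
    rw [hρ, Module.End.mul_apply, h1, sig_apply, hzi]
    norm_num
  have hρzn : (ρ ^ m) z = z := by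
    clear_value z
    induction m with
    | zero => simp
    | succ n ih => rw [pow_succ, Module.End.mul_apply, hρz, ih]
  have hv : v = z + x0 • Finsupp.single i 1 + y0 • Finsupp.single j 1 := by
    rw [hz]; abel
  rw [hv, map_add, map_add, map_smul, map_smul, hρzn, hei, hej]


/-- The generators satisfy all Coxeter relations in `End (B →₀ ℝ)`. -/
lemma isLiftable : M.IsLiftable (sig M) := by
  intro i j
  by_cases h0 : M i j = 0
  · rw [h0, pow_zero]
  by_cases h1 : M i j = 1
  · have hij : i = j := by
      by_contra hne
      exact M.off_diagonal i j hne h1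
    rw [h1, pow_one, hij, sig_sq]
  exact sig_pow M i j h0 h1

end CoxeterGeomAux


open CoxeterGeomAux in
/-- Let `(W,S)` be a Coxeter system with `m(a,b) = ∞` (encoded by the Coxeter
matrix entry being `0`), and let `C = S − {a,b}`. If the visual subgroup `⟨C⟩`
is normal in `⟨{a} ∪ C⟩`, then `a` commutes with every element of `C`. -/
theorem simple_commutes_of_normal_visual {B : Type*} {W : Type*} [Group W]
    (M : CoxeterMatrix B) (cs : CoxeterSystem M W)
    (a b : B) (hab : a ≠ b) (hinf : M a b = 0)
    (C : Set B) (hC : C = Set.univ \ {a, b})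
    (hnormal : ∀ g ∈ Subgroup.closure (cs.simple '' ({a} ∪ C)),
      ∀ h ∈ Subgroup.closure (cs.simple '' C),
        g * h * g⁻¹ ∈ Subgroup.closure (cs.simple '' C)) :
    ∀ c ∈ C, Commute (cs.simple a) (cs.simple c) := by
  classical
  intro c hc
  have hca : c ≠ a := by
    rw [hC] at hc
    rintro rfl
    exact hc.2 (Or.inl rfl)
  -- the geometric representation
  set φ : W →* Module.End ℝ (B →₀ ℝ) := cs.lift ⟨sig M, isLiftable M⟩ with hφ
  have hφs : ∀ i : B, φ (cs.simple i) = sig M i := fun i =>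
    cs.lift_apply_simple (isLiftable M) i
  -- every element of the visual subgroup ⟨C⟩ preserves the `a`-coordinate
  have hinvar : ∀ w ∈ Subgroup.closure (cs.simple '' C),
      ∀ v : B →₀ ℝ, (φ w v) a = v a := by
    intro w hw
    induction hw using Subgroup.closure_induction with
    | mem w hw =>
      rcases hw with ⟨c', hc', rfl⟩
      have hc'a : c' ≠ a := by
        rw [hC] at hc'
        rintro rfl
        exact hc'.2 (Or.inl rfl)
      intro v
      rw [hφs, sig_apply, Finsupp.sub_apply, Finsupp.single_apply, if_neg hc'a, sub_zero]
    | one => intro v; simp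
    | mul w₁ w₂ hw₁ hw₂ ih₁ ih₂ =>
      intro v
      rw [map_mul, Module.End.mul_apply, ih₁, ih₂]
    | inv w hw ih =>
      intro v
      have key : φ w (φ w⁻¹ v) = v := by
        rw [← Module.End.mul_apply, ← map_mul, mul_inv_cancel, map_one, Module.End.one_apply]
      calc (φ w⁻¹ v) a = (φ w (φ w⁻¹ v)) a := (ih _).symm
        _ = v a := by rw [key]
  -- `s_a s_c s_a ∈ ⟨C⟩` by normality
  have hsa_mem : cs.simple a ∈ Subgroup.closure (cs.simple '' ({a} ∪ C)) :=
    Subgroup.subset_closure ⟨a, Or.inl rfl, rfl⟩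
  have hsc_mem : cs.simple c ∈ Subgroup.closure (cs.simple '' C) :=
    Subgroup.subset_closure ⟨c, hc, rfl⟩
  have ht := hnormal _ hsa_mem _ hsc_mem
  rw [cs.inv_simple] at ht
  -- compute the `a`-coordinate of `φ(s_a s_c s_a)` applied to `e_a`
  set β : ℝ := kap M a c with hβ
  have hv1 : sig M a (Finsupp.single a 1) = Finsupp.single a (-1 : ℝ) := by
    rw [sig_apply, bil_single, kap_diag, ← Finsupp.single_sub]
    norm_num
  have hv2 : sig M c (Finsupp.single a (-1 : ℝ))
      = Finsupp.single a (-1 : ℝ) - Finsupp.single c (-(2 * β)) := by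
    rw [sig_apply, bil_single, ← kap_symm, ← hβ]
    ring_nf
  have hb2 : bil M a (Finsupp.single a (-1 : ℝ) - Finsupp.single c (-(2 * β)))
      = 2 * β ^ 2 - 1 := by
    rw [map_sub, bil_single, bil_single, kap_diag, ← hβ]
    ring
  have hcoord : (φ (cs.simple a * cs.simple c * cs.simple a) (Finsupp.single a 1)) a
      = 1 - 4 * β ^ 2 := by
    rw [map_mul, map_mul, hφs, hφs, Module.End.mul_apply, Module.End.mul_apply,
      hv1, hv2, sig_apply, hb2]
    rw [Finsupp.sub_apply, Finsupp.sub_apply, Finsupp.single_apply, Finsupp.single_apply,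
      Finsupp.single_apply, if_pos rfl, if_pos rfl, if_neg hca]
    ring
  have hcoord' : (φ (cs.simple a * cs.simple c * cs.simple a) (Finsupp.single a 1)) a
      = 1 := by
    rw [hinvar _ ht, Finsupp.single_apply, if_pos rfl]
  have hβ0 : β = 0 := by
    have : 4 * β ^ 2 = 0 := by rw [hcoord] at hcoord'; linarith
    have : β ^ 2 = 0 := by linarith
    exact pow_eq_zero_iff (by norm_num : (2:ℕ) ≠ 0) |>.mp this
  -- hence `M a c = 2`
  have hMac : M a c = 2 := by
    by_contra hne
    have h0 : M a c ≠ 0 := by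
      intro h
      rw [hβ, kap, if_pos h] at hβ0
      norm_num at hβ0
    have h1 : M a c ≠ 1 := M.off_diagonal a c (Ne.symm hca)
    have h3 : 3 ≤ M a c := by omega
    have hcos : Real.cos (Real.pi / (M a c : ℝ)) = 0 := by
      rw [hβ, kap, if_neg h0] at hβ0
      linarith
    have hpos : (0:ℝ) < Real.pi / (M a c : ℝ) := by
      apply div_pos Real.pi_pos
      exact_mod_cast by omega
    have hlt : Real.pi / (M a c : ℝ) < Real.pi / 2 := by
      apply div_lt_div_of_pos_left Real.pi_pos (by norm_num)
      exact_mod_cast by omega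
    have := Real.cos_pos_of_mem_Ioo ⟨by linarith [Real.pi_pos], hlt⟩
    linarith
  -- and so `s_a` and `s_c` commute
  have hrel := cs.simple_mul_simple_pow a c
  rw [hMac, sq] at hrel
  have : cs.simple a * cs.simple c = (cs.simple a * cs.simple c)⁻¹ :=
    eq_inv_of_mul_eq_one_left hrel
  rw [mul_inv_rev, cs.inv_simple, cs.inv_simple] at this
  exact this
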